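/- The number of Dyck paths of semilength 2n+1 that avoid all points (4k, 0) for k = 1, 2, ..., n equals 2^{2n+1} * C_n - C_{2n+1}, where C_m denotes the m-th Catalan number. -/

import Mathlib

/-- `l` (a list of steps, `true` = up-step `(1,1)`, `false` = down-step `(1,-1)`)
is a Dyck path of semilength `m`: it has `2 * m` steps, ends on the x-axis,
and never goes below the x-axis. -/
def IsDyckPath (m : ℕ) (l : List Bool) : Prop :=
  l.length = 2 * m ∧ l.count true = l.count false ∧
    ∀ j, (l.take j).count false ≤ (l.take j).count true

/-- The height of the path after its first `j` steps. -/
def pathHeight (l : List Bool) (j : ℕ) : ℤ :=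
  ((l.take j).count true : ℤ) - (l.take j).count false

open Finset List

attribute [local instance] Classical.propDecidable

noncomputable def allB (L : ℕ) : Finset (List Bool) :=
  (Finset.univ : Finset (Fin L → Bool)).image List.ofFn

lemma mem_allB {L : ℕ} {l : List Bool} : l ∈ allB L ↔ l.length = L := by
  constructor
  · intro h
    simp only [allB, Finset.mem_image] at h
    obtain ⟨f, _, rfl⟩ := h
    simp
  · intro h
    subst h
    exact Finset.mem_image.mpr ⟨l.get, Finset.mem_univ _, List.ofFn_get l⟩

noncomputable def dyckF (m : ℕ) : Finset (List Bool) :=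
  (allB (2*m)).filter (fun l => IsDyckPath m l)

noncomputable def primF (m : ℕ) : Finset (List Bool) :=
  (dyckF m).filter (fun l => ∀ j, 0 < j → j < l.length → pathHeight l j ≠ 0)

noncomputable def SF (n : ℕ) : Finset (List Bool) :=
  (dyckF (2*n+1)).filter (fun l => ∀ k ∈ Finset.Icc 1 n, pathHeight l (4*k) ≠ 0)

lemma mem_dyckF {m : ℕ} {l : List Bool} : l ∈ dyckF m ↔ IsDyckPath m l := by
  simp only [dyckF, Finset.mem_filter, mem_allB]
  exact ⟨fun h => h.2, fun h => ⟨h.1, h⟩⟩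

lemma mem_primF {m : ℕ} {l : List Bool} :
    l ∈ primF m ↔ IsDyckPath m l ∧ ∀ j, 0 < j → j < l.length → pathHeight l j ≠ 0 := by
  simp only [primF, Finset.mem_filter, mem_dyckF]

lemma mem_SF {n : ℕ} {l : List Bool} :
    l ∈ SF n ↔ IsDyckPath (2*n+1) l ∧ ∀ k ∈ Finset.Icc 1 n, pathHeight l (4*k) ≠ 0 := by
  simp only [SF, Finset.mem_filter, mem_dyckF]

lemma count_tf (l : List Bool) : l.count true + l.count false = l.length := by
  induction l with
  | nil => rfl
  | cons b t ih => cases b <;> simp [List.count_cons] <;> omega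

/-- counting in Dyck words -/
def stepOf : Bool → DyckStep := fun b => if b then DyckStep.U else DyckStep.D
def boolOf : DyckStep → Bool := fun s => match s with | .U => true | .D => false

lemma stepOf_inj : Function.Injective stepOf := by
  intro a b h
  cases a <;> cases b <;> simp [stepOf] at h ⊢

lemma boolOf_inj : Function.Injective boolOf := by
  intro a b h
  cases a <;> cases b <;> simp [boolOf] at h ⊢

lemma count_map_stepOf (l : List Bool) (b : Bool) :
    (l.map stepOf).count (stepOf b) = l.count b :=
  List.count_map_of_injective l stepOf stepOf_inj b

lemma count_map_boolOf (L : List DyckStep) (s : DyckStep) :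
    (L.map boolOf).count (boolOf s) = L.count s :=
  List.count_map_of_injective L boolOf boolOf_inj s

noncomputable def dyckEquiv (m : ℕ) :
    {l : List Bool // l ∈ dyckF m} ≃ {p : DyckWord // p.semilength = m} where
  toFun := fun ⟨l, hl⟩ => by
    rw [mem_dyckF] at hl
    exact ⟨⟨l.map stepOf,
      by rw [show DyckStep.U = stepOf true from rfl, show DyckStep.D = stepOf false from rfl,
        count_map_stepOf, count_map_stepOf]; exact hl.2.1,
      by intro i
         rw [← List.map_take, show DyckStep.U = stepOf true from rfl,
           show DyckStep.D = stepOf false from rfl, count_map_stepOf, count_map_stepOf]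
         exact hl.2.2 i⟩,
      by
        have h1 := count_tf l
        have h2 := hl.2.1
        have h3 := hl.1
        show (l.map stepOf).count DyckStep.U = m
        rw [show DyckStep.U = stepOf true from rfl, count_map_stepOf]
        omega⟩
  invFun := fun ⟨p, hp⟩ =>
    ⟨p.toList.map boolOf, by
      rw [mem_dyckF]
      have hlen : 2 * p.semilength = p.toList.length := p.two_mul_semilength_eq_length
      have hcU : p.toList.count DyckStep.U = p.semilength := rfl
      refine ⟨by rw [List.length_map]; omega, ?_, ?_⟩
      · rw [show true = boolOf DyckStep.U from rfl, show false = boolOf DyckStep.D from rfl,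
          count_map_boolOf, count_map_boolOf]
        exact p.count_U_eq_count_D
      · intro j
        rw [← List.map_take, show true = boolOf DyckStep.U from rfl,
          show false = boolOf DyckStep.D from rfl, count_map_boolOf, count_map_boolOf]
        exact p.count_D_le_count_U j⟩
  left_inv := fun ⟨l, hl⟩ => by
    simp only [Subtype.mk.injEq]
    rw [List.map_map]
    have : boolOf ∘ stepOf = id := by funext b; cases b <;> rfl
    rw [this, List.map_id]
  right_inv := fun ⟨p, hp⟩ => by
    simp only [Subtype.mk.injEq]
    ext1
    show (p.toList.map boolOf).map stepOf = p.toList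
    rw [List.map_map]
    have : stepOf ∘ boolOf = id := by funext s; cases s <;> rfl
    rw [this, List.map_id]

lemma card_dyckF (m : ℕ) : (dyckF m).card = catalan m := by
  rw [← DyckWord.card_dyckWord_semilength_eq_catalan m, ← Fintype.card_coe (dyckF m)]
  exact Fintype.card_congr (dyckEquiv m)

lemma count_take_append (l₁ l₂ : List Bool) (j : ℕ) (b : Bool) :
    ((l₁ ++ l₂).take j).count b = (l₁.take j).count b + (l₂.take (j - l₁.length)).count b := by
  rw [List.take_append, List.count_append]

lemma count_take_of_le {l : List Bool} {j : ℕ} (h : l.length ≤ j) (b : Bool) :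
    (l.take j).count b = l.count b := by
  rw [List.take_of_length_le h]

lemma ph_le (l₁ l₂ : List Bool) {j : ℕ} (h : j ≤ l₁.length) :
    pathHeight (l₁ ++ l₂) j = pathHeight l₁ j := by
  unfold pathHeight
  rw [List.take_append]
  have : j - l₁.length = 0 := by omega
  rw [this, List.take_zero, List.append_nil]

lemma ph_zero (l : List Bool) : pathHeight l 0 = 0 := by simp [pathHeight]

lemma ph_ge (l₁ l₂ : List Bool) {j : ℕ} (h : l₁.length ≤ j) :
    pathHeight (l₁ ++ l₂) j = pathHeight l₁ l₁.length + pathHeight l₂ (j - l₁.length) := by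
  unfold pathHeight
  rw [List.take_append, List.take_of_length_le h, List.take_length,
    List.count_append, List.count_append]
  push_cast
  ring

lemma ph_total {m : ℕ} {l : List Bool} (h : IsDyckPath m l) :
    pathHeight l l.length = 0 := by
  unfold pathHeight
  rw [List.take_length]
  have := h.2.1
  omega

lemma ph_nonneg {m : ℕ} {l : List Bool} (h : IsDyckPath m l) (j : ℕ) :
    0 ≤ pathHeight l j := by
  unfold pathHeight
  have := h.2.2 j
  omega

lemma ph_take (l : List Bool) (r j : ℕ) (h : j ≤ r) :
    pathHeight (l.take r) j = pathHeight l j := by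
  unfold pathHeight
  rw [List.take_take, min_eq_left h]

/-- primitive paths are shifted Dyck paths -/
lemma primF_eq_image (m : ℕ) :
    primF (m+1) = (dyckF m).image (fun l => true :: (l ++ [false])) := by
  ext l
  simp only [Finset.mem_image]
  constructor
  · intro h
    rw [mem_primF] at h
    obtain ⟨hd, hpos⟩ := h
    have hlen : l.length = 2*m+2 := by have := hd.1; omega
    obtain ⟨b, t, rfl⟩ : ∃ b t, l = b :: t := by
      cases l with
      | nil => simp at hlen
      | cons b t => exact ⟨b, t, rfl⟩
    have hb : b = true := by
      by_contra hb
      have hb' : b = false := by cases b <;> simp_all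
      subst hb'
      have := hd.2.2 1
      simp [List.take_succ_cons, List.count_cons] at this
    subst hb
    have ht : t ≠ [] := by
      intro h
      subst h
      simp only [List.length_cons, List.length_nil] at hlen
      omega
    obtain ⟨t', c, hcc⟩ := t.eq_nil_or_concat.resolve_left ht
    rw [List.concat_eq_append] at hcc
    subst hcc
    have hlt' : t'.length = 2*m := by
      simp only [List.length_cons, List.length_append, List.length_singleton, List.length_nil] at hlen
      omega
    have hc : c = false := by
      by_contra hc
      have hc' : c = true := by cases c <;> simp_all
      subst hc'
      have h1 := hd.2.2 (2*m+1)
      have h2 := hd.2.1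
      have htake : (true :: (t' ++ [true])).take (2*m+1) = true :: t' := by
        rw [show (2*m+1) = t'.length + 1 by omega, List.take_succ_cons,
          List.take_append, List.take_length, Nat.sub_self,
          List.take_zero, List.append_nil]
      rw [htake] at h1
      simp only [List.count_cons, List.count_append, List.count_nil, List.count_singleton] at h1 h2
      simp at h1 h2
      omega
    subst hc
    refine ⟨t', ?_, rfl⟩
    rw [mem_dyckF]
    have hcnt := hd.2.1
    simp only [List.count_cons, List.count_append, List.count_nil, List.count_singleton] at hcnt
    simp at hcnt
    refine ⟨hlt', by omega, ?_⟩
    intro j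
    rcases le_or_gt t'.length j with hj | hj
    · rw [count_take_of_le hj, count_take_of_le hj]
      omega
    · have htake : (true :: (t' ++ [false])).take (j+1) = true :: (t'.take j) := by
        rw [List.take_succ_cons, List.take_append]
        have hz : j - t'.length = 0 := by omega
        rw [hz, List.take_zero, List.append_nil]
      have hp := hpos (j+1) (by omega) (by simp only [List.length_cons,
        List.length_append, List.length_singleton, List.length_nil]; omega)
      have hnn := hd.2.2 (j+1)
      unfold pathHeight at hp
      rw [htake] at hp hnn
      simp only [List.count_cons, List.count_nil] at hp hnn
      simp at hp hnn
      omega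
  · rintro ⟨l', hl', rfl⟩
    rw [mem_dyckF] at hl'
    obtain ⟨hlen, hcnt, hpre⟩ := hl'
    rw [mem_primF]
    refine ⟨⟨by simp [hlen]; omega, by simp [List.count_cons, List.count_append, hcnt], ?_⟩, ?_⟩
    · intro j
      cases j with
      | zero => simp
      | succ i =>
        rcases le_or_gt i l'.length with hi | hi
        · have htake : (true :: (l' ++ [false])).take (i+1) = true :: (l'.take i) := by
            rw [List.take_succ_cons, List.take_append,
              show i - l'.length = 0 by omega, List.take_zero, List.append_nil]
          rw [htake]
          simp only [List.count_cons]
          have h1 := hpre i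
          simp
          omega
        · have hlenX : (true :: (l' ++ [false])).length ≤ i + 1 := by
            simp only [List.length_cons, List.length_append, List.length_singleton, List.length_nil]
            omega
          rw [count_take_of_le hlenX, count_take_of_le hlenX]
          simp only [List.count_cons, List.count_append, List.count_nil, List.count_singleton]
          simp
          omega
    · intro j hj hjlen
      simp only [List.length_cons, List.length_append, List.length_singleton, List.length_nil] at hjlen
      obtain ⟨i, rfl⟩ : ∃ i, j = i + 1 := ⟨j - 1, by omega⟩
      unfold pathHeight
      rw [List.take_succ_cons, List.take_append]
      have hz : i - l'.length = 0 := by omega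
      rw [hz, List.take_zero, List.append_nil]
      simp only [List.count_cons, List.count_nil]
      have h1 := hpre i
      simp
      omega

lemma card_primF (m : ℕ) : (primF (m+1)).card = catalan m := by
  rw [primF_eq_image]
  rw [Finset.card_image_of_injective _ (fun a b h => by
    simp only [List.cons.injEq, true_and] at h
    exact List.append_left_injective [false] h)]
  exact card_dyckF m

lemma SF_length {n : ℕ} {l : List Bool} (h : l ∈ SF n) : l.length = 4*n+2 := by
  rw [mem_SF] at h
  have := h.1.1
  omega

lemma primF_length {m : ℕ} {l : List Bool} (h : l ∈ primF m) : l.length = 2*m := by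
  rw [mem_primF] at h
  exact h.1.1

lemma append_mem_SF {n k : ℕ} (hk : k < n) {l₁ p : List Bool}
    (h₁ : l₁ ∈ SF (n-1-k)) (hp : p ∈ primF (2*k+2)) : l₁ ++ p ∈ SF n := by
  have hL1 : l₁.length = 4*(n-1-k)+2 := SF_length h₁
  have hLp : p.length = 4*k+4 := by have := primF_length hp; omega
  rw [mem_SF] at h₁ ⊢
  rw [mem_primF] at hp
  obtain ⟨⟨hl1, hc1, hpre1⟩, hav1⟩ := h₁
  obtain ⟨⟨hlp, hcp, hprep⟩, hposp⟩ := hp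
  constructor
  · refine ⟨by rw [List.length_append]; omega,
      by rw [List.count_append, List.count_append]; omega, ?_⟩
    intro j
    rw [count_take_append, count_take_append]
    have := hpre1 j
    have := hprep (j - l₁.length)
    omega
  · intro k' hk'
    rw [Finset.mem_Icc] at hk'
    rcases le_or_gt (4*k') l₁.length with hle | hgt
    · rw [ph_le _ _ hle]
      exact hav1 k' (Finset.mem_Icc.mpr ⟨hk'.1, by omega⟩)
    · rw [ph_ge _ _ (le_of_lt hgt), ph_total ⟨hl1, hc1, hpre1⟩, zero_add]
      exact hposp _ (by omega) (by omega)

lemma prim_sub_SF {n : ℕ} : primF (2*n+1) ⊆ SF n := by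
  intro l h
  rw [mem_primF] at h
  rw [mem_SF]
  refine ⟨h.1, ?_⟩
  intro k hk
  rw [Finset.mem_Icc] at hk
  have hlen := h.1.1
  exact h.2 (4*k) (by omega) (by omega)

lemma SF_decomp (n : ℕ) :
    SF n = primF (2*n+1) ∪ (Finset.range n).biUnion
      (fun k => ((SF (n-1-k)) ×ˢ (primF (2*k+2))).image (fun q => q.1 ++ q.2)) := by
  ext l
  simp only [Finset.mem_union, Finset.mem_biUnion, Finset.mem_image]
  constructor
  · intro hl
    rw [mem_SF] at hl
    obtain ⟨hd, hav⟩ := hl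
    have hlen : l.length = 4*n+2 := by have := hd.1; omega
    set Z := (Finset.range l.length).filter (fun j => pathHeight l j = 0) with hZ
    have h0Z : 0 ∈ Z := by
      rw [hZ, Finset.mem_filter, Finset.mem_range]
      exact ⟨by omega, ph_zero l⟩
    set r := Z.max' ⟨0, h0Z⟩ with hr
    have hrZ : r ∈ Z := Z.max'_mem _
    rw [hZ, Finset.mem_filter, Finset.mem_range] at hrZ
    obtain ⟨hrlen, hrzero⟩ := hrZ
    have hrmax : ∀ j, r < j → j < l.length → pathHeight l j ≠ 0 := by
      intro j h1 h2 h3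
      have hjZ : j ∈ Z := by rw [hZ, Finset.mem_filter, Finset.mem_range]; exact ⟨h2, h3⟩
      have := Finset.le_max' Z j hjZ
      omega
    rcases Nat.eq_zero_or_pos r with hr0 | hrpos
    · left
      rw [mem_primF]
      exact ⟨hd, fun j hj hjl => hrmax j (by omega) hjl⟩
    · right
      have hcc := count_tf (l.take r)
      have hlt : (l.take r).length = r := by rw [List.length_take]; omega
      have hph' : (l.take r).count true = (l.take r).count false := by
        have := hrzero
        unfold pathHeight at this
        omega
      have h4 : r % 4 = 2 := by
        by_contra h4
        have hr40 : r % 4 = 0 := by omega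
        have hk0 := hav (r/4) (Finset.mem_Icc.mpr ⟨by omega, by omega⟩)
        rw [show 4*(r/4) = r by omega] at hk0
        exact hk0 hrzero
      set t := (r-2)/4 with ht
      have hrt : r = 4*t+2 := by omega
      have htn : t ≤ n-1 ∧ 1 ≤ n := by omega
      have hct : ∀ b, l.count b = (l.take r).count b + (l.drop r).count b := by
        intro b
        conv_lhs => rw [← List.take_append_drop r l]
        rw [List.count_append]
      have hkey : ∀ i b, (l.take (r+i)).count b = (l.take r).count b + ((l.drop r).take i).count b := by
        intro i b
        conv_lhs => rw [← List.take_append_drop r l]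
        rw [count_take_append, hlt, List.take_of_length_le (by rw [hlt]; omega),
          show r + i - r = i by omega]
      have hdlen : (l.drop r).length = 4*(n-t) := by rw [List.length_drop]; omega
      have hnt : n-1-(n-1-t) = t := by omega
      have hSmem : l.take r ∈ SF t := by
        rw [mem_SF]
        constructor
        · refine ⟨by rw [List.length_take]; omega, hph', ?_⟩
          intro j
          rw [List.take_take]
          exact hd.2.2 (min j r)
        · intro k' hk'
          rw [Finset.mem_Icc] at hk'
          rw [ph_take l r (4*k') (by omega)]
          exact hav k' (Finset.mem_Icc.mpr ⟨hk'.1, by omega⟩)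
      have hPmem : l.drop r ∈ primF (2*(n-1-t)+2) := by
        rw [mem_primF]
        have hc2 := hd.2.1
        have hctT := hct true
        have hctF := hct false
        refine ⟨⟨by rw [hdlen]; omega, by omega, ?_⟩, ?_⟩
        · intro i
          have h1 := hd.2.2 (r+i)
          have h2 := hkey i true
          have h3 := hkey i false
          omega
        · intro i hi hilen
          have hne := hrmax (r+i) (by omega) (by rw [hdlen] at hilen; omega)
          unfold pathHeight at hne ⊢
          have h2 := hkey i true
          have h3 := hkey i false
          omega
      refine ⟨n-1-t, by rw [Finset.mem_range]; omega, ⟨l.take r, l.drop r⟩,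
        Finset.mem_product.mpr ⟨by rw [hnt]; exact hSmem, hPmem⟩,
        List.take_append_drop r l⟩
  · intro h
    rcases h with hprim | ⟨k, hk, ⟨l₁, p⟩, hpair, heq⟩
    · exact prim_sub_SF hprim
    · rw [Finset.mem_product] at hpair
      have h1 : l₁ ∈ SF (n-1-k) := hpair.1
      have h2 : p ∈ primF (2*k+2) := hpair.2
      rw [← heq]
      exact append_mem_SF (Finset.mem_range.mp hk) h1 h2

lemma ph_append_mid {m : ℕ} {l₁ p : List Bool} (h : IsDyckPath m l₁) :
    pathHeight (l₁ ++ p) l₁.length = 0 := by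
  rw [ph_le _ _ (le_refl _)]
  exact ph_total h

lemma SF_isDyck {n : ℕ} {l : List Bool} (h : l ∈ SF n) : IsDyckPath (2*n+1) l :=
  (mem_SF.mp h).1

lemma disj1 (n : ℕ) : Disjoint (primF (2*n+1))
    ((Finset.range n).biUnion
      (fun k => ((SF (n-1-k)) ×ˢ (primF (2*k+2))).image (fun q => q.1 ++ q.2))) := by
  rw [Finset.disjoint_left]
  intro l hl hl'
  simp only [Finset.mem_biUnion, Finset.mem_image] at hl'
  obtain ⟨k, hk, ⟨l₁, p⟩, hpair, heq⟩ := hl'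
  rw [Finset.mem_product] at hpair
  rw [Finset.mem_range] at hk
  have hm1 : l₁ ∈ SF (n-1-k) := hpair.1
  have hm2 : p ∈ primF (2*k+2) := hpair.2
  have hL1 : l₁.length = 4*(n-1-k)+2 := SF_length hm1
  have hLp : p.length = 4*k+4 := by have := primF_length hm2; omega
  have hz : pathHeight l l₁.length = 0 := by
    rw [← heq]
    exact ph_append_mid (SF_isDyck hm1)
  have hll : l.length = 4*n+2 := by
    rw [← heq]
    show (l₁ ++ p).length = 4*n+2
    rw [List.length_append]
    omega
  exact (mem_primF.mp hl).2 l₁.length (by omega) (by omega) hz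

lemma aux_d2 {n k k' : ℕ} (hk : k < n) (hk' : k' < n) {l₁ p l₁' p' : List Bool}
    (h₁ : l₁ ∈ SF (n-1-k)) (hp : p ∈ primF (2*k+2))
    (h₁' : l₁' ∈ SF (n-1-k')) (hp' : p' ∈ primF (2*k'+2))
    (heq : l₁ ++ p = l₁' ++ p') (hlt : l₁.length < l₁'.length) : False := by
  have hL1 : l₁.length = 4*(n-1-k)+2 := SF_length h₁
  have hL1' : l₁'.length = 4*(n-1-k')+2 := SF_length h₁'
  have hLp : p.length = 4*k+4 := by have := primF_length hp; omega
  have hLp' : p'.length = 4*k'+4 := by have := primF_length hp'; omega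
  have hz : pathHeight (l₁ ++ p) l₁'.length = 0 := by
    rw [heq]
    exact ph_append_mid (SF_isDyck h₁')
  rw [ph_ge _ _ (le_of_lt hlt), ph_total (SF_isDyck h₁), zero_add] at hz
  have htot : (l₁ ++ p).length = (l₁' ++ p').length := by rw [heq]
  rw [List.length_append, List.length_append] at htot
  exact (mem_primF.mp hp).2 (l₁'.length - l₁.length) (by omega) (by omega) hz

lemma disj2 (n : ℕ) : ∀ k ∈ Finset.range n, ∀ k' ∈ Finset.range n, k ≠ k' →
    Disjoint (((SF (n-1-k)) ×ˢ (primF (2*k+2))).image (fun q => q.1 ++ q.2))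
      (((SF (n-1-k')) ×ˢ (primF (2*k'+2))).image (fun q => q.1 ++ q.2)) := by
  intro k hk k' hk' hne
  rw [Finset.mem_range] at hk hk'
  rw [Finset.disjoint_left]
  intro l hl hl'
  simp only [Finset.mem_image] at hl hl'
  obtain ⟨⟨l₁, p⟩, hpair, heq⟩ := hl
  obtain ⟨⟨l₁', p'⟩, hpair', heq'⟩ := hl'
  rw [Finset.mem_product] at hpair hpair'
  have heq2 : l₁ ++ p = l₁' ++ p' := by rw [heq, heq']
  have ha1 : l₁ ∈ SF (n-1-k) := hpair.1
  have ha2 : p ∈ primF (2*k+2) := hpair.2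
  have hb1 : l₁' ∈ SF (n-1-k') := hpair'.1
  have hb2 : p' ∈ primF (2*k'+2) := hpair'.2
  have hL1 : l₁.length = 4*(n-1-k)+2 := SF_length ha1
  have hL1' : l₁'.length = 4*(n-1-k')+2 := SF_length hb1
  rcases lt_trichotomy l₁.length l₁'.length with h | h | h
  · exact aux_d2 hk hk' ha1 ha2 hb1 hb2 heq2 h
  · omega
  · exact aux_d2 hk' hk hb1 hb2 ha1 ha2 heq2.symm h

lemma SF_card_rec (n : ℕ) :
    (SF n).card = catalan (2*n) + ∑ k ∈ Finset.range n,
      catalan (2*k+1) * (SF (n-1-k)).card := by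
  rw [SF_decomp n, Finset.card_union_of_disjoint (disj1 n), Finset.card_biUnion (disj2 n)]
  congr 1
  · exact card_primF (2*n)
  · apply Finset.sum_congr rfl
    intro k hk
    rw [Finset.card_image_of_injOn (fun q1 hq1 q2 hq2 heq => by
      rw [Finset.mem_coe, Finset.mem_product] at hq1 hq2
      have hq1' : q1.1 ∈ SF (n-1-k) := hq1.1
      have hq2' : q2.1 ∈ SF (n-1-k) := hq2.1
      have h1 : q1.1.length = q2.1.length := by
        rw [SF_length hq1', SF_length hq2']
      obtain ⟨ha, hb⟩ := List.append_inj heq h1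
      exact Prod.ext ha hb)]
    rw [Finset.card_product, card_primF (2*k+1)]
    ring

section Alg

open PowerSeries

noncomputable def Dps : PowerSeries ℤ := PowerSeries.mk fun n => (catalan n : ℤ)
noncomputable def Qps : PowerSeries ℤ := PowerSeries.rescale (-1) Dps
noncomputable def Ops : PowerSeries ℤ :=
  PowerSeries.mk fun n => if Odd n then (catalan n : ℤ) else 0
noncomputable def Eps : PowerSeries ℤ :=
  PowerSeries.mk fun n => if Odd n then 0 else (catalan n : ℤ)
noncomputable def Tps : PowerSeries ℤ :=
  PowerSeries.mk fun n => if Odd n then 2 ^ n * (catalan (n / 2) : ℤ) else 0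

lemma coeff_two_mul (n : ℕ) (f : PowerSeries ℤ) :
    PowerSeries.coeff n (2 * f) = 2 * PowerSeries.coeff n f := by
  rw [two_mul, map_add, two_mul]

lemma sum_antidiagonal_oddodd (N : ℕ) (f : ℕ × ℕ → ℤ)
    (hf : ∀ p : ℕ × ℕ, p ∈ antidiagonal (2 * N) → (¬ Odd p.1 ∨ ¬ Odd p.2) → f p = 0) :
    ∑ p ∈ antidiagonal (2 * N), f p
      = ∑ k ∈ Finset.range N, f (2 * k + 1, 2 * (N - 1 - k) + 1) := by
  refine (Finset.sum_of_injOn (fun k => (2 * k + 1, 2 * (N - 1 - k) + 1)) ?_ ?_ ?_ ?_).symm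
  · intro a ha b hb h
    simp only [Finset.coe_range, Set.mem_Iio] at ha hb
    simp only [Prod.mk.injEq] at h
    omega
  · intro k hk
    simp only [Finset.coe_range, Set.mem_Iio] at hk
    simp only [mem_coe, Finset.HasAntidiagonal.mem_antidiagonal]
    omega
  · rintro ⟨i, j⟩ hp hnp
    refine hf (i, j) hp ?_
    by_contra hcon
    push_neg at hcon
    obtain ⟨⟨a, ha⟩, ⟨b, hb⟩⟩ := hcon
    apply hnp
    rw [Finset.HasAntidiagonal.mem_antidiagonal] at hp
    refine ⟨a, ?_, ?_⟩
    · simp only [Finset.coe_range, Set.mem_Iio]; omega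
    · simp only [Prod.mk.injEq]; omega
  · intro k _; rfl

lemma hD : Dps = 1 + X * Dps ^ 2 := by
  ext n
  cases n with
  | zero => simp [Dps]
  | succ n =>
    rw [map_add, PowerSeries.coeff_one, if_neg (Nat.succ_ne_zero n), pow_two,
      PowerSeries.coeff_succ_X_mul, PowerSeries.coeff_mul, zero_add]
    simp only [Dps, PowerSeries.coeff_mk]
    rw [catalan_succ' n]
    push_cast
    rfl

lemma hQ : Qps = 1 - X * Qps ^ 2 := by
  have h : Qps = 1 + PowerSeries.C (-1) * X * Qps ^ 2 := by
    unfold Qps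
    have h := congrArg (PowerSeries.rescale (-1 : ℤ)) hD
    rwa [map_add, map_mul, map_one, map_pow, PowerSeries.rescale_X] at h
  have hc : PowerSeries.C (-1 : ℤ) = -1 := by simp
  rw [hc] at h
  linear_combination h

lemma coeffQ (n : ℕ) : PowerSeries.coeff n Qps = (-1) ^ n * catalan n := by
  simp [Qps, PowerSeries.coeff_rescale, Dps]

lemma h2O : Dps - Qps = 2 * Ops := by
  ext n
  rw [map_sub, coeffQ, coeff_two_mul]
  simp only [Ops, Dps, PowerSeries.coeff_mk]
  rcases Nat.even_or_odd n with he | ho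
  · rw [he.neg_one_pow, if_neg (by simpa using he)]
    ring
  · rw [ho.neg_one_pow, if_pos ho]
    ring

lemma h2E : Dps + Qps = 2 * Eps := by
  ext n
  rw [map_add, coeffQ, coeff_two_mul]
  simp only [Eps, Dps, PowerSeries.coeff_mk]
  rcases Nat.even_or_odd n with he | ho
  · rw [he.neg_one_pow, if_neg (by simpa using he)]
    ring
  · rw [ho.neg_one_pow, if_pos ho]
    ring

lemma coeffT (n : ℕ) :
    PowerSeries.coeff n Tps = if Odd n then 2 ^ n * (catalan (n / 2) : ℤ) else 0 := by
  simp [Tps]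

lemma coeffO (n : ℕ) :
    PowerSeries.coeff n Ops = if Odd n then (catalan n : ℤ) else 0 := by
  simp [Ops]

lemma hT : Tps = 2 * X + 2 * (X * Tps ^ 2) := by
  ext n
  cases n with
  | zero => simp [Tps]
  | succ n =>
    rw [map_add, coeff_two_mul, coeff_two_mul, pow_two, PowerSeries.coeff_succ_X_mul,
      PowerSeries.coeff_mul, coeffT, PowerSeries.coeff_X]
    rcases Nat.even_or_odd n with he | ho
    · -- n even, n + 1 odd
      obtain ⟨m, hm⟩ := he
      have hn : n = 2 * m := by omega
      subst hn
      have hodd : Odd (2*m+1) := ⟨m, by ring⟩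
      rw [if_pos hodd]
      rw [sum_antidiagonal_oddodd m _ (by
        rintro ⟨i, j⟩ hp (h | h) <;>
          simp only [coeffT, if_neg h, zero_mul, mul_zero])]
      have hterm : ∀ k ∈ Finset.range m,
          (PowerSeries.coeff (2*k+1, 2*(m-1-k)+1).1 Tps) *
            (PowerSeries.coeff (2*k+1, 2*(m-1-k)+1).2 Tps)
            = 2 ^ (2*m) * ((catalan k : ℤ) * (catalan (m-1-k) : ℤ)) := by
        intro k hk
        rw [Finset.mem_range] at hk
        have ho1 : Odd (2*k+1) := ⟨k, by ring⟩
        have ho2 : Odd (2*(m-1-k)+1) := ⟨m-1-k, by ring⟩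
        rw [coeffT, coeffT, if_pos ho1, if_pos ho2]
        have h1 : (2*k+1)/2 = k := by omega
        have h2 : (2*(m-1-k)+1)/2 = m-1-k := by omega
        rw [h1, h2]
        rw [show (2:ℤ)^(2*k+1) * (catalan k : ℤ) * (2^(2*(m-1-k)+1) * (catalan (m-1-k) : ℤ))
            = 2^((2*k+1)+(2*(m-1-k)+1)) * ((catalan k : ℤ) * (catalan (m-1-k):ℤ)) by
          rw [pow_add]; ring]
        congr 2
        omega
      rw [Finset.sum_congr rfl hterm, ← Finset.mul_sum]
      cases m with
      | zero => norm_num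
      | succ m' =>
        rw [if_neg (by omega)]
        have hcat : ∑ k ∈ Finset.range (m'+1), ((catalan k : ℤ) * (catalan (m'+1-1-k) : ℤ))
            = (catalan (m'+1) : ℤ) := by
          rw [catalan_succ' m']
          push_cast
          rw [Nat.sum_antidiagonal_eq_sum_range_succ_mk]
        rw [hcat]
        have hdiv : (2*(m'+1)+1)/2 = m'+1 := by omega
        rw [hdiv, pow_succ]
        ring
    · -- n odd, n + 1 even
      rw [if_neg (by rw [Nat.odd_add_one]; exact not_not_intro ho)]
      rw [if_neg (show ¬(n+1=1) by rcases ho with ⟨t,ht⟩; omega)]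
      rw [Finset.sum_eq_zero (by
        rintro ⟨i, j⟩ hp
        rw [Finset.HasAntidiagonal.mem_antidiagonal] at hp
        rcases Nat.even_or_odd i with hi | hi
        · rw [coeffT, if_neg (by simpa using hi), zero_mul]
        · have hj : ¬ Odd j := by
            intro hj
            have := Odd.add_odd hi hj
            rw [hp] at this
            exact (Nat.not_even_iff_odd.mpr ho) this
          simp only [coeffT]
          rw [if_neg hj, mul_zero])]
      ring

lemma psTwoNeZero : (2 : PowerSeries ℤ) ≠ 0 := by
  intro h
  have := congrArg (PowerSeries.constantCoeff) h
  simp only [map_ofNat, map_zero] at this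
  exact two_ne_zero this

lemma hW : Ops + X * Dps * Qps = 2 * X + 2 * (X * (Ops + X * Dps * Qps) ^ 2) := by
  have hS : Dps - Qps + 2 * (X * Dps * Qps)
      = 4 * X + X * (Dps - Qps + 2 * (X * Dps * Qps)) ^ 2 := by
    linear_combination (1 + 4*X*Qps + 4*X^2*Qps^2) * hD + (4*X - 1) * hQ
  apply mul_left_cancel₀ psTwoNeZero
  calc 2 * (Ops + X * Dps * Qps)
      = Dps - Qps + 2 * (X * Dps * Qps) := by linear_combination -h2O
    _ = 4 * X + X * (Dps - Qps + 2 * (X * Dps * Qps)) ^ 2 := hS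
    _ = 4 * X + X * (2 * (Ops + X * Dps * Qps)) ^ 2 := by
        linear_combination (X * (Dps - Qps + 2 * Ops + 4 * (X * Dps * Qps))) * h2O
    _ = 2 * (2 * X + 2 * (X * (Ops + X * Dps * Qps) ^ 2)) := by ring

lemma uniq (F G : PowerSeries ℤ) (hF : F = 2 * X + 2 * (X * F ^ 2))
    (hG : G = 2 * X + 2 * (X * G ^ 2)) : F = G := by
  ext n
  induction n using Nat.strong_induction_on with
  | _ n ih =>
    conv_lhs => rw [hF]
    conv_rhs => rw [hG]
    simp only [map_add, coeff_two_mul]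
    suffices h : PowerSeries.coeff n (X * F ^ 2) = PowerSeries.coeff n (X * G ^ 2) by
      rw [h]
    cases n with
    | zero => simp
    | succ n =>
      rw [pow_two, pow_two, PowerSeries.coeff_succ_X_mul, PowerSeries.coeff_succ_X_mul,
        PowerSeries.coeff_mul, PowerSeries.coeff_mul]
      apply Finset.sum_congr rfl
      rintro ⟨i, j⟩ hp
      rw [Finset.HasAntidiagonal.mem_antidiagonal] at hp
      have hi : i < n + 1 := by omega
      have hj : j < n + 1 := by omega
      rw [ih i hi, ih j hj]

lemma hTW : Tps = Ops + X * Dps * Qps := uniq _ _ hT hW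

lemma hfinal : (Tps - Ops) * (1 - X * Ops) = X * Eps := by
  have hcore : Dps * Qps * (2 - X * (Dps - Qps)) = Dps + Qps := by
    linear_combination Qps * hD + Dps * hQ
  have h1 : Tps - Ops = X * (Dps * Qps) := by rw [hTW]; ring
  rw [h1]
  apply mul_left_cancel₀ psTwoNeZero
  apply mul_left_cancel₀ psTwoNeZero
  linear_combination (2*X^2*Dps*Qps) * h2O + (2*X) * hcore + (2*X) * h2E

/-- The target quantity. -/
def tZ (m : ℕ) : ℤ := 2 ^ (2 * m + 1) * catalan m - catalan (2 * m + 1)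

lemma coeff_TO (j : ℕ) :
    PowerSeries.coeff j (Tps - Ops) = if Odd j then tZ (j / 2) else 0 := by
  rw [map_sub, coeffT, coeffO]
  rcases Nat.even_or_odd j with he | ho
  · rw [if_neg (by simpa using he), if_neg (by simpa using he), if_neg (by simpa using he)]
    ring
  · rw [if_pos ho, if_pos ho, if_pos ho]
    obtain ⟨t, ht⟩ := ho
    subst ht
    have : (2*t+1)/2 = t := by omega
    rw [this, tZ]

lemma tZ_rec (n : ℕ) :
    tZ n = (catalan (2 * n) : ℤ)
      + ∑ k ∈ Finset.range n, (catalan (2 * k + 1) : ℤ) * tZ (n - 1 - k) := by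
  have h : Tps - Ops = X * Eps + X * (Ops * (Tps - Ops)) := by
    linear_combination hfinal
  have hc := congrArg (PowerSeries.coeff (2 * n + 1)) h
  rw [coeff_TO, map_add, PowerSeries.coeff_succ_X_mul, PowerSeries.coeff_succ_X_mul,
    PowerSeries.coeff_mul] at hc
  have hodd : Odd (2*n+1) := ⟨n, by ring⟩
  rw [if_pos hodd] at hc
  have hdiv : (2*n+1)/2 = n := by omega
  rw [hdiv] at hc
  rw [sum_antidiagonal_oddodd n _ (by
    rintro ⟨i, j⟩ hp (h' | h')
    · rw [coeffO, if_neg h', zero_mul]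
    · rw [coeff_TO, if_neg h', mul_zero])] at hc
  have hE : PowerSeries.coeff (2*n) Eps = (catalan (2*n) : ℤ) := by
    rw [Eps, PowerSeries.coeff_mk, if_neg (by simp [Nat.odd_iff])]
  rw [hE] at hc
  rw [hc]
  congr 1
  apply Finset.sum_congr rfl
  intro k hk
  rw [Finset.mem_range] at hk
  show (PowerSeries.coeff (2*k+1)) Ops * (PowerSeries.coeff (2*(n-1-k)+1)) (Tps - Ops) = _
  rw [coeffO, coeff_TO]
  have ho1 : Odd (2*k+1) := ⟨k, by ring⟩
  have ho2 : Odd (2*(n-1-k)+1) := ⟨n-1-k, by ring⟩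
  rw [if_pos ho1, if_pos ho2]
  have hd : (2*(n-1-k)+1)/2 = n-1-k := by omega
  rw [hd]

lemma key_card (n : ℕ) : ((SF n).card : ℤ) = tZ n := by
  induction n using Nat.strong_induction_on with
  | _ n ih =>
    rw [SF_card_rec n, tZ_rec n]
    push_cast
    congr 1
    apply Finset.sum_congr rfl
    intro k hk
    rw [Finset.mem_range] at hk
    rw [ih (n-1-k) (by omega)]

end Alg

theorem dyck_paths_avoiding_4k_odd (n : ℕ) :
    ({l : List Bool | IsDyckPath (2 * n + 1) l ∧
        ∀ k ∈ Finset.Icc 1 n, pathHeight l (4 * k) ≠ 0}.ncard : ℤ) =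
      2 ^ (2 * n + 1) * catalan n - catalan (2 * n + 1) := by
  have hset : {l : List Bool | IsDyckPath (2 * n + 1) l ∧
      ∀ k ∈ Finset.Icc 1 n, pathHeight l (4 * k) ≠ 0} = ↑(SF n) := by
    ext l
    rw [Set.mem_setOf_eq, Finset.mem_coe, mem_SF]
  rw [hset, Set.ncard_coe_finset, key_card n, tZ]
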